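/- Let A ∈ (0,1), b ≥ 2, θ ∈ (0,1) with bθ³ ≤ 1. Suppose λ : ℤ → (0,∞) is symmetric with λ(0)=1 and sup_{ℓ≥0} λ(ℓ+1)/λ(ℓ) ≤ Aε for some ε > 0 with Aε < 1. Define F_q(λ) := θ^{q²} G_q(λ)/G_0(λ) where G_q(λ) := ∑_{ℓ₁+⋯+ℓ_b=q} ∏_{i=1}^b λ(ℓ_i). Then sup_{q≥1} F_{q+1}(λ)/F_q(λ) ≤ b θ³ A ε ≤ A ε. -/

import Mathlib

open scoped BigOperators

/-- Preservation of geometric ratio decay by the renormalization map (Eq. 6.56):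
for `λ` symmetric positive with `λ(0)=1` and `sup_{ℓ≥0} λ(ℓ+1)/λ(ℓ) ≤ Aε`, the
map `F_q(λ) = θ^{q²} G_q(λ)/G_0(λ)` satisfies
`F_{q+1}(λ)/F_q(λ) ≤ b θ³ A ε ≤ A ε` for `q ≥ 1`, provided `bθ³ ≤ 1`. -/
theorem stmt18 (b : ℕ) (hb : 2 ≤ b) (θ A ε : ℝ) (hθ0 : 0 < θ) (hθ1 : θ < 1)
    (hbθ : (b : ℝ) * θ ^ 3 ≤ 1) (hA0 : 0 < A) (hA1 : A < 1)
    (hε : 0 < ε) (hAε : A * ε < 1)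
    (lam : ℤ → ℝ) (hpos : ∀ q : ℤ, 0 < lam q) (hsym : ∀ q : ℤ, lam (-q) = lam q)
    (hlam0 : lam 0 = 1)
    (hratio : ∀ ℓ : ℕ, lam ((ℓ : ℤ) + 1) / lam ℓ ≤ A * ε)
    (G : ℤ → ℝ)
    (hG : ∀ q : ℤ, G q = ∑' ℓ : {ℓ : Fin b → ℤ // ∑ i, ℓ i = q}, ∏ i, lam (ℓ.1 i))
    (hsum : ∀ q : ℤ,
      Summable (fun ℓ : {ℓ : Fin b → ℤ // ∑ i, ℓ i = q} => ∏ i, lam (ℓ.1 i)))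
    (F : ℕ → ℝ) (hF : ∀ q : ℕ, F q = θ ^ (q ^ 2) * G q / G 0) :
    ∀ q : ℕ, 1 ≤ q →
      F (q + 1) / F q ≤ (b : ℝ) * θ ^ 3 * (A * ε) ∧
        (b : ℝ) * θ ^ 3 * (A * ε) ≤ A * ε := by
  classical
  have hAε0 : 0 < A * ε := mul_pos hA0 hε
  have hprodpos : ∀ {t : ℤ} (ℓ : {ℓ : Fin b → ℤ // ∑ i, ℓ i = t}),
      0 < ∏ i, lam (ℓ.1 i) := fun ℓ => Finset.prod_pos fun i _ => hpos _
  have hGpos : ∀ t : ℤ, 0 < G t := by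
    intro t
    rw [hG t]
    have hb0 : 0 < b := by omega
    refine Summable.tsum_pos (hsum t) (fun ℓ => (hprodpos ℓ).le)
      ⟨fun i => if i = (⟨0, hb0⟩ : Fin b) then t else 0, by simp⟩ (hprodpos _)
  have key : ∀ t : ℤ, 0 < t → G (t + 1) ≤ (b : ℝ) * (A * ε) * G t := by
    intro t ht
    have hex : ∀ ℓ : {ℓ : Fin b → ℤ // ∑ i, ℓ i = t + 1}, ∃ i, 1 ≤ ℓ.1 i := by
      intro ℓ
      by_contra h
      push_neg at h
      have hle : ∑ i, ℓ.1 i ≤ 0 :=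
        Finset.sum_nonpos fun i _ => by have := h i; omega
      rw [ℓ.2] at hle; omega
    set X1 := {ℓ : Fin b → ℤ // ∑ i, ℓ i = t + 1} with hX1
    set X0 := {ℓ : Fin b → ℤ // ∑ i, ℓ i = t} with hX0
    have hI : ∀ ℓ : X1, 1 ≤ ℓ.1 ((hex ℓ).choose) := fun ℓ => (hex ℓ).choose_spec
    let dec : X1 → (Σ _ : Fin b, X0) := fun ℓ =>
      ⟨(hex ℓ).choose, ⟨fun j => ℓ.1 j - if j = (hex ℓ).choose then 1 else 0, by
        rw [Finset.sum_sub_distrib, ℓ.2]; simp⟩⟩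
    have hinj : Function.Injective dec := by
      intro ℓ ℓ' h
      have h1 : (hex ℓ).choose = (hex ℓ').choose := congrArg Sigma.fst h
      have h2 := congrArg (fun p : (Σ _ : Fin b, X0) => (p.2.1 : Fin b → ℤ)) h
      apply Subtype.ext
      funext j
      have h3 := congrFun h2 j
      simp only [dec] at h3
      rw [h1] at h3
      exact sub_left_inj.mp h3
    have hpt : ∀ ℓ : X1, ∏ i, lam (ℓ.1 i) ≤ (A * ε) * ∏ i, lam ((dec ℓ).2.1 i) := by
      intro ℓ
      set i0 := (hex ℓ).choose with hi0
      have h1 : ∏ i, lam (ℓ.1 i)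
          = lam (ℓ.1 i0) * ∏ i ∈ Finset.univ.erase i0, lam (ℓ.1 i) :=
        (Finset.mul_prod_erase Finset.univ _ (Finset.mem_univ i0)).symm
      have h2 : ∏ i, lam ((dec ℓ).2.1 i)
          = lam (ℓ.1 i0 - 1) * ∏ i ∈ Finset.univ.erase i0, lam (ℓ.1 i) := by
        rw [← Finset.mul_prod_erase Finset.univ (fun i => lam ((dec ℓ).2.1 i))
          (Finset.mem_univ i0)]
        congr 1
        · simp [dec, ← hi0]
        · refine Finset.prod_congr rfl fun j hj => ?_
          have hne : j ≠ i0 := Finset.ne_of_mem_erase hj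
          simp [dec, ← hi0, hne]
      have hstep : lam (ℓ.1 i0) ≤ (A * ε) * lam (ℓ.1 i0 - 1) := by
        have h1le := hI ℓ
        rw [← hi0] at h1le
        obtain ⟨n, hn⟩ : ∃ n : ℕ, (n : ℤ) = ℓ.1 i0 - 1 :=
          ⟨(ℓ.1 i0 - 1).toNat, Int.toNat_of_nonneg (by omega)⟩
        have hr := hratio n
        rw [div_le_iff₀ (hpos n)] at hr
        have hcast : (n : ℤ) + 1 = ℓ.1 i0 := by omega
        rw [← hn, ← hcast]
        exact hr
      rw [h1, h2, ← mul_assoc]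
      exact mul_le_mul_of_nonneg_right hstep
        (Finset.prod_nonneg fun i _ => (hpos _).le)
    have hgsum : Summable (fun p : (Σ _ : Fin b, X0) => (A * ε) * ∏ i, lam (p.2.1 i)) := by
      refine (summable_sigma_of_nonneg fun p => ?_).2
        ⟨fun i => (hsum t).mul_left (A * ε), Summable.of_finite⟩
      exact mul_nonneg hAε0.le (Finset.prod_nonneg fun i _ => (hpos _).le)
    have htsum : ∑' p : (Σ _ : Fin b, X0), (A * ε) * ∏ i, lam (p.2.1 i)
        = (b : ℝ) * ((A * ε) * G t) := by
      rw [Summable.tsum_sigma hgsum, tsum_fintype]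
      have hfib : ∀ i : Fin b, ∑' m : X0, (A * ε) * ∏ j, lam (m.1 j) = (A * ε) * G t := by
        intro i; rw [tsum_mul_left, hG]
      rw [Finset.sum_congr rfl fun i _ => hfib i, Finset.sum_const,
        Finset.card_univ, Fintype.card_fin, nsmul_eq_mul]
    calc G (t + 1) = ∑' ℓ : X1, ∏ i, lam (ℓ.1 i) := hG _
      _ ≤ ∑' p : (Σ _ : Fin b, X0), (A * ε) * ∏ i, lam (p.2.1 i) :=
          Summable.tsum_le_tsum_of_inj dec hinj
            (fun p _ => mul_nonneg hAε0.le (Finset.prod_nonneg fun i _ => (hpos _).le))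
            hpt (hsum (t + 1)) hgsum
      _ = (b : ℝ) * (A * ε) * G t := by rw [htsum]; ring
  intro q hq
  constructor
  · have hFq : 0 < F q := by
      rw [hF]
      exact div_pos (mul_pos (pow_pos hθ0 _) (hGpos q)) (hGpos 0)
    have hkey := key (q : ℤ) (by exact_mod_cast hq)
    have hpow : θ ^ ((q + 1) ^ 2) ≤ θ ^ 3 * θ ^ (q ^ 2) := by
      have he : (q + 1) ^ 2 = q ^ 2 + (2 * q + 1) := by ring
      rw [he, pow_add, mul_comm]
      exact mul_le_mul_of_nonneg_right
        (pow_le_pow_of_le_one hθ0.le hθ1.le (by omega)) (pow_nonneg hθ0.le _)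
    have hFq1 : F (q + 1) ≤ (b : ℝ) * θ ^ 3 * (A * ε) * F q := by
      rw [hF, hF]
      have hcast : ((q + 1 : ℕ) : ℤ) = (q : ℤ) + 1 := by push_cast; ring
      rw [hcast]
      have h2 : (b : ℝ) * θ ^ 3 * (A * ε) * (θ ^ (q ^ 2) * G ↑q / G 0)
          = ((θ ^ 3 * θ ^ (q ^ 2)) * ((b : ℝ) * (A * ε) * G ↑q)) / G 0 := by ring
      rw [h2]
      have h1 : θ ^ ((q + 1) ^ 2) * G ((q : ℤ) + 1)
          ≤ (θ ^ 3 * θ ^ (q ^ 2)) * ((b : ℝ) * (A * ε) * G ↑q) :=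
        mul_le_mul hpow hkey (hGpos _).le (by positivity)
      exact div_le_div_of_nonneg_right h1 (hGpos 0).le |>.trans_eq rfl
    rw [div_le_iff₀ hFq]
    exact hFq1
  · calc (b : ℝ) * θ ^ 3 * (A * ε) ≤ 1 * (A * ε) :=
        mul_le_mul_of_nonneg_right hbθ hAε0.le
      _ = A * ε := one_mul _
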